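/- Let p be a prime with p > 3. Then, as an exact identity of rational numbers, ∑_{a=1}^{p−1} q_p(a) = −1 + 1/p + ∑_{j=1}^{p} binomial(p, j) · p^{j−2} · B_{p−j}. -/

import Mathlib

open Finset

/-- `x ≡ y (mod p^k)` for rationals: `x - y = p^k * (c/d)` with `p ∤ d`. -/
def ratCongr (p k : ℕ) (x y : ℚ) : Prop :=
  ∃ c d : ℤ, ¬ (p : ℤ) ∣ d ∧ x - y = (p : ℚ) ^ k * ((c : ℚ) / (d : ℚ))

/-- The Wilson quotient `W_p = ((p-1)! + 1)/p` (an integer by Wilson's theorem). -/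
def wilsonQuotient (p : ℕ) : ℤ := ((Nat.factorial (p - 1) : ℤ) + 1) / p

/-- The Fermat quotient `q_p(a) = (a^(p-1) - 1)/p` (an integer for `p ∤ a`). -/
def fermatQuotient (p a : ℕ) : ℤ := ((a : ℤ) ^ (p - 1) - 1) / p

/-- A prime `p` is a Wilson prime if `p ∣ W_p`. -/
def IsWilsonPrime (p : ℕ) : Prop := (p : ℤ) ∣ wilsonQuotient p

/-- A prime `p` is a Lerch prime if `∑_{a=1}^{p-1} q_p(a) ≡ W_p (mod p²)`. -/
def IsLerchPrime (p : ℕ) : Prop :=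
  (p : ℤ) ^ 2 ∣ (∑ a ∈ Icc 1 (p - 1), fermatQuotient p a) - wilsonQuotient p

/-- The harmonic number `H_a = ∑_{k=1}^{a} 1/k`. -/
def harmonicNum (a : ℕ) : ℚ := ∑ k ∈ Icc 1 a, (1 : ℚ) / k

/-- The generalized harmonic number `H_{a,2} = ∑_{k=1}^{a} 1/k²`. -/
def harmonicNum2 (a : ℕ) : ℚ := ∑ k ∈ Icc 1 a, (1 : ℚ) / (k : ℚ) ^ 2

theorem stmt_9 (p : ℕ) (hp : p.Prime) (hp3 : 3 < p) :
    (((∑ a ∈ Icc 1 (p - 1), fermatQuotient p a : ℤ)) : ℚ) =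
      -1 + 1 / (p : ℚ) +
        ∑ j ∈ Icc 1 p, (p.choose j : ℚ) * (p : ℚ) ^ ((j : ℤ) - 2) * bernoulli (p - j) := by
  haveI : Fact p.Prime := ⟨hp⟩
  have hp0 : (p : ℚ) ≠ 0 := Nat.cast_ne_zero.mpr hp.pos.ne'
  -- Step 1: cast the Fermat quotient sum to rationals
  have hcast : (((∑ a ∈ Icc 1 (p - 1), fermatQuotient p a : ℤ)) : ℚ) =
      ∑ a ∈ Icc 1 (p - 1), (((a : ℚ) ^ (p - 1) - 1) / p) := by
    push_cast
    refine Finset.sum_congr rfl fun a ha => ?_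
    simp only [mem_Icc] at ha
    have hpa : ¬ p ∣ a := by
      intro hdvd
      have := Nat.le_of_dvd (by omega) hdvd
      omega
    have hdvd : (p : ℤ) ∣ ((a : ℤ) ^ (p - 1) - 1) := by
      have h0 : ((a : ZMod p)) ≠ 0 := by
        rw [Ne, ZMod.natCast_eq_zero_iff]; exact hpa
      have h1 := ZMod.pow_card_sub_one_eq_one h0
      have h2 : (((a : ℤ) ^ (p - 1) - 1 : ℤ) : ZMod p) = 0 := by
        push_cast
        rw [h1]; ring
      exact (ZMod.intCast_zmod_eq_zero_iff_dvd _ _).mp h2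
    rw [fermatQuotient, Int.cast_div_charZero hdvd]
    push_cast
    ring
  rw [hcast]
  -- Step 2: relate to sum over range p
  have hrange : ∑ a ∈ Icc 1 (p - 1), (((a : ℚ) ^ (p - 1) - 1) / p) =
      (∑ a ∈ range p, (((a : ℚ) ^ (p - 1) - 1) / p)) + 1 / p := by
    rw [Finset.range_eq_Ico, Finset.sum_eq_sum_Ico_succ_bot hp.pos]
    have hico : Ico 1 p = Icc 1 (p - 1) := by
      rw [← Finset.Ico_add_one_right_eq_Icc]; congr 1; omega
    rw [hico]
    have h0 : ((0 : ℕ) : ℚ) ^ (p - 1) = 0 := by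
      rw [Nat.cast_zero, zero_pow]; omega
    rw [h0]
    ring
  rw [hrange]
  -- Step 3: the range sum equals S/p - 1
  have hsplit : ∑ a ∈ range p, (((a : ℚ) ^ (p - 1) - 1) / p) =
      (∑ a ∈ range p, ((a : ℚ) ^ (p - 1))) / p - 1 := by
    rw [← Finset.sum_div, Finset.sum_sub_distrib, Finset.sum_const, Finset.card_range]
    field_simp
    rw [nsmul_eq_mul, mul_one]
  rw [hsplit]
  -- Step 4: Faulhaber's formula
  have hpp : p - 1 + 1 = p := by omega
  have hfaul : (∑ a ∈ range p, ((a : ℚ) ^ (p - 1))) =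
      ∑ i ∈ range p, bernoulli i * (p.choose i) * (p : ℚ) ^ (p - i) / p := by
    have h := sum_range_pow p (p - 1)
    rw [hpp] at h
    rw [h]
    refine Finset.sum_congr rfl fun i _ => ?_
    have : ((p - 1 : ℕ) : ℚ) + 1 = p := by
      rw [Nat.cast_sub hp.one_lt.le]; ring
    rw [this]
  rw [hfaul]
  -- Step 5: suffices S = p * R
  rw [sub_add_eq_add_sub]
  have key : (∑ i ∈ range p, bernoulli i * (p.choose i) * (p : ℚ) ^ (p - i) / p) =
      p * ∑ j ∈ Icc 1 p, (p.choose j : ℚ) * (p : ℚ) ^ ((j : ℤ) - 2) * bernoulli (p - j) := by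
    rw [Finset.mul_sum]
    rw [show Icc 1 p = Ico 1 (p + 1) by rw [Finset.Ico_add_one_right_eq_Icc]]
    rw [Finset.sum_Ico_eq_sum_range]
    simp only [Nat.add_sub_cancel]
    rw [← Finset.sum_range_reflect (fun i => (p : ℚ) *
      ((p.choose (1 + i) : ℚ) * (p : ℚ) ^ (((1 + i : ℕ) : ℤ) - 2) * bernoulli (p - (1 + i)))) p]
    refine Finset.sum_congr rfl fun i hi => ?_
    simp only [mem_range] at hi
    have h1 : 1 + (p - 1 - i) = p - i := by omega
    have h2 : p - (p - i) = i := by omega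
    have h3 : p.choose (p - i) = p.choose i := Nat.choose_symm (by omega)
    rw [h1, h2, h3]
    have h4 : (p : ℚ) ^ (((p - i : ℕ) : ℤ) - 2) * (p : ℚ) ^ (2 : ℕ) = (p : ℚ) ^ (p - i) := by
      rw [← zpow_natCast (p : ℚ) 2, ← zpow_add₀ hp0, ← zpow_natCast (p : ℚ) (p - i)]
      norm_num
    rw [← h4]
    field_simp
  rw [key, mul_div_cancel_left₀ _ hp0]
  ring
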